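/- Let X₁, X₂, … be i.i.d. copies of a random variable X in a measurable space 𝒳 and φ : 𝒳 → ℝ^d measurable with E[‖φ(X)‖] < ∞. Define N* = min{n : E[φ(X)] ∈ conv{φ(X₁),…,φ(Xₙ)}} (with N* = ∞ if no such n exists). Then E[N*] < ∞. -/

import Mathlib

open MeasureTheory ProbabilityTheory
open scoped ENNReal

set_option maxHeartbeats 1000000
set_option synthInstance.maxHeartbeats 400000

lemma mem_convexHull_of_forall_dual {d : ℕ} {μ : Fin d → ℝ} {F : Set (Fin d → ℝ)}
    (hF : F.Finite) (h : ∀ f : (Fin d → ℝ) →L[ℝ] ℝ, ∃ z ∈ F, f μ ≤ f z) :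
    μ ∈ convexHull ℝ F := by
  by_contra hμ
  obtain ⟨f, u, h1, h2⟩ := geometric_hahn_banach_closed_point
    (convex_convexHull ℝ F) (hF.isClosed_convexHull (𝕜 := ℝ)) hμ
  obtain ⟨z, hz, hfz⟩ := h f
  exact absurd (lt_trans (h1 z (subset_convexHull ℝ F hz)) h2) (not_lt.2 hfz)

lemma geom_key {d : ℕ} (μ : Fin d → ℝ)
    (W U : Submodule ℝ ((Fin d → ℝ) →L[ℝ] ℝ)) (hWU : IsCompl W U)
    (A : Set (Fin d → ℝ)) (hA : ∀ y ∈ A, ∀ w ∈ W, w y = w μ)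
    (I : Finset ((Fin d → ℝ) →L[ℝ] ℝ)) (t R : ((Fin d → ℝ) →L[ℝ] ℝ) → ℝ)
    (hcover : ∀ g : (Fin d → ℝ) →L[ℝ] ℝ, g ∈ U → ‖g‖ = 1 →
      ∃ i ∈ I, ‖g - i‖ * R i < t i)
    (F : Set (Fin d → ℝ)) (hFne : F.Nonempty) (hFA : F ⊆ A)
    (hhit : ∀ i ∈ I, ∃ z ∈ F, t i ≤ i z - i μ ∧ ‖z - μ‖ ≤ R i) :
    ∀ f : (Fin d → ℝ) →L[ℝ] ℝ, ∃ z ∈ F, f μ ≤ f z := by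
  intro f
  have hf : f ∈ W ⊔ U := by rw [hWU.sup_eq_top]; trivial
  obtain ⟨w, hw, g, hg, rfl⟩ := Submodule.mem_sup.mp hf
  by_cases hg0 : g = 0
  · obtain ⟨z, hz⟩ := hFne
    refine ⟨z, hz, ?_⟩
    simp [hg0, hA z (hFA hz) w hw]
  · have hgn : ‖g‖ ≠ 0 := norm_ne_zero_iff.mpr hg0
    set gh : (Fin d → ℝ) →L[ℝ] ℝ := ‖g‖⁻¹ • g with hgh
    have hghU : gh ∈ U := U.smul_mem _ hg
    have hgh1 : ‖gh‖ = 1 := by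
      simp only [hgh, norm_smul (α := ℝ) (β := (Fin d → ℝ) →L[ℝ] ℝ), norm_inv, norm_norm]; exact inv_mul_cancel₀ hgn
    obtain ⟨i, hi, hlt⟩ := hcover gh hghU hgh1
    obtain ⟨z, hz, h1, h2⟩ := hhit i hi
    refine ⟨z, hz, ?_⟩
    have hwz : w z = w μ := hA z (hFA hz) w hw
    have hbound : |(gh - i) (z - μ)| ≤ ‖gh - i‖ * R i := by
      calc |(gh - i) (z - μ)| ≤ ‖gh - i‖ * ‖z - μ‖ := (gh - i).le_opNorm _
        _ ≤ ‖gh - i‖ * R i := by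
            exact mul_le_mul_of_nonneg_left h2 (norm_nonneg _)
    have hpos : 0 < gh (z - μ) := by
      have h3 : gh (z - μ) = i (z - μ) + (gh - i) (z - μ) := by
        simp
      have h4 : i (z - μ) = i z - i μ := map_sub i z μ
      have h5 : -(t i) < (gh - i) (z - μ) := by
        have := (abs_le.mp hbound).1
        linarith [hlt]
      rw [h3, h4]; linarith
    have hgz : 0 < g (z - μ) := by
      have : g (z - μ) = ‖g‖ * gh (z - μ) := by
        rw [hgh]
        simp [ContinuousLinearMap.smul_apply]
        field_simp
      rw [this]
      exact mul_pos (lt_of_le_of_ne (norm_nonneg g) (Ne.symm hgn)) hpos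
    have hg' : g (z - μ) = g z - g μ := map_sub g z μ
    simp only [ContinuousLinearMap.add_apply]
    linarith [hg' ▸ hgz]

lemma pos_meas_of_integral_zero {Ω : Type*} [MeasurableSpace Ω] (P : Measure Ω)
    [IsProbabilityMeasure P]
    (Y : Ω → ℝ) (hY : Integrable Y P) (hmean : ∫ ω, Y ω ∂P = 0)
    (hne : ¬ (∀ᵐ ω ∂P, Y ω = 0)) : 0 < P {ω | 0 < Y ω} := by
  by_contra h
  push_neg at h
  have h0 : P {ω | 0 < Y ω} = 0 := le_antisymm (by simpa using h) zero_le
  have hnn : 0 ≤ᵐ[P] (fun ω => -Y ω) := by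
    rw [Filter.EventuallyLE, ae_iff]
    refine measure_mono_null ?_ h0
    intro ω hω
    simp only [Set.mem_setOf_eq, not_le, Pi.zero_apply] at hω ⊢
    linarith
  have hint : Integrable (fun ω => -Y ω) P := hY.neg
  have hz : (fun ω => -Y ω) =ᵐ[P] 0 := by
    rw [← integral_eq_zero_iff_of_nonneg_ae hnn hint, integral_neg, hmean, neg_zero]
  refine hne (hz.mono fun ω h => ?_)
  simp only [Pi.zero_apply] at h
  linarith [neg_eq_zero.mp h]

/-- The stopping index `N* = min {n : E[φ(X)] ∈ conv {φ(X_1), …, φ(X_n)}}` (valued in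
`ℝ≥0∞`, equal to `⊤ = ∞` if no such `n` exists) has finite expectation. -/
theorem monte_carlo_cubature_stopping_time_integrable {d : ℕ} {𝒳 : Type*}
    [m𝒳 : MeasurableSpace 𝒳]
    {Ω : Type*} [MeasurableSpace Ω] (P : Measure Ω) [IsProbabilityMeasure P]
    (X : Ω → 𝒳) (hX : Measurable X)
    (Xs : ℕ → Ω → 𝒳) (hXs : ∀ i, Measurable (Xs i))
    (hindep : iIndepFun Xs P)
    (hident : ∀ i, IdentDistrib (Xs i) X P P)
    (φ : 𝒳 → Fin d → ℝ) (hφ : Measurable φ)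
    (hint : Integrable (fun ω => φ (X ω)) P) :
    ∫⁻ ω, sInf {r : ENNReal | ∃ n : ℕ, r = n ∧
        (∫ ω', φ (X ω') ∂P) ∈ convexHull ℝ ((fun i => φ (Xs i ω)) '' Set.Iio n)} ∂P
      < ⊤ := by
  classical
  set mu : Fin d → ℝ := ∫ ω', φ (X ω') ∂P with hmu
  -- the subspace of functionals a.s. constant on the samples
  set W : Submodule ℝ ((Fin d → ℝ) →L[ℝ] ℝ) :=
    { carrier := {f | ∀ᵐ ω ∂P, f (φ (X ω)) = f mu}
      add_mem' := fun hf hg => by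
        simp only [Set.mem_setOf_eq] at hf hg ⊢
        filter_upwards [hf, hg] with ω h1 h2
        simp [ContinuousLinearMap.add_apply, h1, h2]
      zero_mem' := by simp
      smul_mem' := fun c f hf => by
        simp only [Set.mem_setOf_eq] at hf ⊢
        filter_upwards [hf] with ω h
        simp [ContinuousLinearMap.smul_apply, h] } with hW
  obtain ⟨U, hWU⟩ := Submodule.exists_isCompl W
  -- basis of W and the set A
  haveI : Module.Free ℝ ↥W := Module.Free.of_basis (Module.Basis.ofVectorSpace ℝ ↥W)
  let bW := Module.finBasis ℝ ↥W
  set Aset : Set (Fin d → ℝ) :=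
    ⋂ k, {y | (bW k : (Fin d → ℝ) →L[ℝ] ℝ) y = (bW k : (Fin d → ℝ) →L[ℝ] ℝ) mu} with hAdef
  have hAmeas : MeasurableSet Aset := by
    refine MeasurableSet.iInter fun k => ?_
    exact (isClosed_eq (bW k : (Fin d → ℝ) →L[ℝ] ℝ).continuous continuous_const).measurableSet
  have hAspan : ∀ y ∈ Aset, ∀ w ∈ W, w y = w mu := by
    intro y hy w hw
    have hrepr := bW.sum_repr ⟨w, hw⟩
    have hw' : w = ∑ k, (bW.repr ⟨w, hw⟩ k) • ((bW k : ↥W) : (Fin d → ℝ) →L[ℝ] ℝ) := by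
      conv_lhs => rw [show w = ((⟨w, hw⟩ : ↥W) : (Fin d → ℝ) →L[ℝ] ℝ) from rfl, ← hrepr]
      push_cast
      rfl
    rw [hw']
    simp only [ContinuousLinearMap.coe_sum', Finset.sum_apply,
      ContinuousLinearMap.coe_smul', Pi.smul_apply]
    refine Finset.sum_congr rfl fun k _ => ?_
    have hk := Set.mem_iInter.mp hy k
    simp only [Set.mem_setOf_eq] at hk
    rw [hk]
  have hAae : ∀ᵐ ω ∂P, φ (X ω) ∈ Aset := by
    have : ∀ᵐ ω ∂P, ∀ k, (bW k : (Fin d → ℝ) →L[ℝ] ℝ) (φ (X ω))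
        = (bW k : (Fin d → ℝ) →L[ℝ] ℝ) mu :=
      ae_all_iff.mpr fun k => (bW k).2
    filter_upwards [this] with ω hω
    exact Set.mem_iInter.mpr fun k => hω k
  have hAXs : ∀ᵐ ω ∂P, ∀ j : ℕ, φ (Xs j ω) ∈ Aset := by
    rw [ae_all_iff]
    intro j
    have hcomp : IdentDistrib (fun ω => φ (Xs j ω)) (fun ω => φ (X ω)) P P :=
      (hident j).comp hφ
    have heq : P ((fun ω => φ (Xs j ω)) ⁻¹' Asetᶜ) = P ((fun ω => φ (X ω)) ⁻¹' Asetᶜ) :=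
      hcomp.measure_mem_eq hAmeas.compl
    rw [ae_iff]
    rw [ae_iff] at hAae
    convert heq.trans hAae using 2
    rfl
  -- positivity of halfspace probabilities for functionals outside W
  have hpos : ∀ g : (Fin d → ℝ) →L[ℝ] ℝ, g ∈ U → g ≠ 0 →
      0 < P {ω | 0 < g (φ (X ω)) - g mu} := by
    intro g hgU hg0
    have hgint : Integrable (fun ω => g (φ (X ω)) - g mu) P :=
      (g.integrable_comp hint).sub (integrable_const _)
    refine pos_meas_of_integral_zero P _ hgint ?_ ?_
    · rw [integral_sub (g.integrable_comp hint) (integrable_const _),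
        g.integral_comp_comm hint, integral_const]
      simp [hmu]
    · intro hae
      have hgW : g ∈ W := by
        show ∀ᵐ ω ∂P, g (φ (X ω)) = g mu
        filter_upwards [hae] with ω h
        linarith
      have : g ∈ W ⊓ U := ⟨hgW, hgU⟩
      rw [hWU.inf_eq_bot] at this
      exact hg0 this
  -- selection of margins
  set K : Set ((Fin d → ℝ) →L[ℝ] ℝ) := (U : Set _) ∩ Metric.sphere 0 1 with hK
  have hsel : ∀ g : (Fin d → ℝ) →L[ℝ] ℝ, ∃ t R : ℝ, 0 < t ∧ 0 < R ∧
      (g ∈ K → 0 < P {ω | t ≤ g (φ (X ω)) - g mu ∧ ‖φ (X ω) - mu‖ ≤ R}) := by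
    intro g
    by_cases hgK : g ∈ K
    · have hg0 : g ≠ 0 := by
        intro h
        have := hgK.2
        rw [h, mem_sphere_zero_iff_norm] at this
        simp at this
      have hp := hpos g hgK.1 hg0
      have hsub : {ω | 0 < g (φ (X ω)) - g mu} ⊆ ⋃ k : ℕ,
          {ω | ((k : ℝ) + 1)⁻¹ ≤ g (φ (X ω)) - g mu ∧ ‖φ (X ω) - mu‖ ≤ (k : ℝ) + 1} := by
        intro ω hω
        simp only [Set.mem_setOf_eq] at hω
        obtain ⟨k1, hk1⟩ := exists_nat_ge (g (φ (X ω)) - g mu)⁻¹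
        obtain ⟨k2, hk2⟩ := exists_nat_ge ‖φ (X ω) - mu‖
        refine Set.mem_iUnion.mpr ⟨k1 + k2, ?_, ?_⟩
        · have h3 : ((↑(k1 + k2) : ℝ) + 1)⁻¹ ≤ ((g (φ (X ω)) - g mu)⁻¹)⁻¹ := by
            refine inv_anti₀ (inv_pos.mpr hω) ?_
            push_cast at hk1 ⊢
            linarith [Nat.cast_nonneg (α := ℝ) k2]
          rwa [inv_inv] at h3
        · push_cast
          linarith [Nat.cast_nonneg (α := ℝ) k1]
      have hexk : ∃ k : ℕ, P {ω | ((k : ℝ) + 1)⁻¹ ≤ g (φ (X ω)) - g mu ∧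
          ‖φ (X ω) - mu‖ ≤ (k : ℝ) + 1} ≠ 0 := by
        by_contra hall
        push_neg at hall
        have hz := measure_iUnion_null hall
        exact absurd (measure_mono_null hsub hz) (ne_of_gt hp)
      obtain ⟨k, hk⟩ := hexk
      exact ⟨((k : ℝ) + 1)⁻¹, (k : ℝ) + 1, by positivity, by positivity,
        fun _ => pos_iff_ne_zero.mpr hk⟩
    · exact ⟨1, 1, one_pos, one_pos, fun h => absurd h hgK⟩
  choose t R ht hR hp using hsel
  -- compactness and the finite cover
  have hKcomp : IsCompact K := by
    refine Metric.isCompact_of_isClosed_isBounded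
      (U.closed_of_finiteDimensional.inter Metric.isClosed_sphere) ?_
    exact Metric.isBounded_sphere.subset Set.inter_subset_right
  have hKsub : K ⊆ ⋃ g ∈ K, Metric.ball g (t g / R g) := fun g hg =>
    Set.mem_biUnion hg (Metric.mem_ball_self (div_pos (ht g) (hR g)))
  obtain ⟨I0, hI0K, hI0fin, hI0cover⟩ :=
    hKcomp.elim_finite_subcover_image (fun g _ => Metric.isOpen_ball) hKsub
  set I : Finset ((Fin d → ℝ) →L[ℝ] ℝ) := hI0fin.toFinset with hI
  have hIK : ∀ i ∈ I, i ∈ K := fun i hi => hI0K (hI0fin.mem_toFinset.mp hi)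
  have hcov' : ∀ g : (Fin d → ℝ) →L[ℝ] ℝ, g ∈ U → ‖g‖ = 1 →
      ∃ i ∈ I, ‖g - i‖ * R i < t i := by
    intro g hgU hg1
    have hgK : g ∈ K := ⟨hgU, mem_sphere_zero_iff_norm.mpr hg1⟩
    obtain ⟨i, hiI0, hi⟩ := Set.mem_iUnion₂.mp (hI0cover hgK)
    refine ⟨i, hI0fin.mem_toFinset.mpr hiI0, ?_⟩
    rw [Metric.mem_ball, dist_eq_norm] at hi
    exact (lt_div_iff₀ (hR i)).mp hi
  -- the target sets in 𝒳
  set B : ((Fin d → ℝ) →L[ℝ] ℝ) → Set 𝒳 := fun i =>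
    {x | t i ≤ i (φ x) - i mu ∧ ‖φ x - mu‖ ≤ R i} with hB
  have hBmeas : ∀ i, MeasurableSet (B i) := by
    intro i
    have : B i = φ ⁻¹' {y | t i ≤ i y - i mu ∧ ‖y - mu‖ ≤ R i} := rfl
    rw [this]
    refine hφ ?_
    refine MeasurableSet.inter ?_ ?_
    · exact (isClosed_le continuous_const (i.continuous.sub continuous_const)).measurableSet
    · exact (isClosed_le (continuous_id.sub continuous_const).norm continuous_const).measurableSet
  have hpB : ∀ i ∈ I, 0 < P (X ⁻¹' B i) := fun i hi => hp i (hIK i hi)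
  set q : ((Fin d → ℝ) →L[ℝ] ℝ) → ℝ≥0∞ := fun i => P (X ⁻¹' (B i)ᶜ) with hqdef
  have hq1 : ∀ i ∈ I, q i < 1 := by
    intro i hi
    have : X ⁻¹' (B i)ᶜ = (X ⁻¹' B i)ᶜ := rfl
    rw [hqdef]
    simp only [this]
    rw [prob_compl_eq_one_sub (hX (hBmeas i))]
    exact ENNReal.sub_lt_self ENNReal.one_ne_top one_ne_zero (ne_of_gt (hpB i hi))
  -- waiting sets
  set G : ((Fin d → ℝ) →L[ℝ] ℝ) → ℕ → Set Ω := fun i n =>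
    ⋂ j ∈ Finset.range n, Xs j ⁻¹' (B i)ᶜ with hG
  have hGmeas : ∀ i n, MeasurableSet (G i n) := fun i n =>
    MeasurableSet.biInter (Finset.range n).countable_toSet
      (fun j _ => hXs j (hBmeas i).compl)
  have hGmeasure : ∀ i n, P (G i n) = q i ^ n := by
    intro i n
    rw [hG]
    have := hindep.meas_biInter (S := Finset.range n)
      (s := fun j => Xs j ⁻¹' (B i)ᶜ) (fun j _ => ⟨(B i)ᶜ, (hBmeas i).compl, rfl⟩)
    rw [this]
    have heach : ∀ j, P (Xs j ⁻¹' (B i)ᶜ) = q i := fun j =>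
      (hident j).measure_mem_eq (hBmeas i).compl
    rw [Finset.prod_congr rfl fun j _ => heach j, Finset.prod_const, Finset.card_range]
  -- waiting times
  set T : ((Fin d → ℝ) →L[ℝ] ℝ) → Ω → ℝ≥0∞ := fun i ω =>
    ∑' n : ℕ, (G i (n + 1)).indicator (1 : Ω → ℝ≥0∞) ω with hT
  have hTmeas : ∀ i, Measurable (T i) := fun i =>
    Measurable.ennreal_tsum fun n => measurable_one.indicator (hGmeas i (n + 1))
  have hTint : ∀ i ∈ I, ∫⁻ ω, T i ω ∂P < ⊤ := by
    intro i hi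
    rw [hT]
    simp only
    rw [lintegral_tsum (f := fun n => (G i (n + 1)).indicator (1 : Ω → ℝ≥0∞))
      fun n => (measurable_one.indicator (hGmeas i (n + 1))).aemeasurable]
    have : ∀ n : ℕ, ∫⁻ ω, (G i (n + 1)).indicator (1 : Ω → ℝ≥0∞) ω ∂P
        = q i ^ (n + 1) := by
      intro n
      rw [lintegral_indicator_one (hGmeas i (n + 1)), hGmeasure]
    rw [tsum_congr this]
    calc ∑' n : ℕ, q i ^ (n + 1) ≤ ∑' n : ℕ, q i ^ n := by
          refine ENNReal.tsum_le_tsum fun n => ?_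
          rw [pow_succ]
          exact le_trans (mul_le_mul_right (hq1 i hi).le _) (by rw [mul_one])
      _ = (1 - q i)⁻¹ := ENNReal.tsum_geometric _
      _ < ⊤ := ENNReal.inv_lt_top.mpr (tsub_pos_iff_lt.mpr (hq1 i hi))
  -- a.e. pointwise bound on the stopping index
  have habound : ∀ᵐ ω ∂P, sInf {r : ENNReal | ∃ n : ℕ, r = n ∧
      mu ∈ convexHull ℝ ((fun i => φ (Xs i ω)) '' Set.Iio n)} ≤ 1 + ∑ i ∈ I, T i ω := by
    filter_upwards [hAXs] with ω hω
    by_cases hfin : ∑ i ∈ I, T i ω = ⊤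
    · rw [hfin]
      simp
    · have hTfin : ∀ i ∈ I, T i ω ≠ ⊤ := by
        intro i hi
        intro htop
        exact hfin (ENNReal.sum_eq_top.mpr ⟨i, hi, htop⟩)
      have hex : ∀ i ∈ I, ∃ j : ℕ, Xs j ω ∈ B i := by
        intro i hi
        by_contra hno
        push_neg at hno
        have hmem : ∀ n, ω ∈ G i (n + 1) := fun n =>
          Set.mem_iInter₂.mpr fun j _ => hno j
        have : T i ω = ⊤ := by
          rw [hT]
          simp only
          rw [tsum_congr fun n => Set.indicator_of_mem (hmem n) (1 : Ω → ℝ≥0∞)]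
          exact ENNReal.tsum_const_eq_top_of_ne_zero one_ne_zero
        exact hTfin i hi this
      set ji : ((Fin d → ℝ) →L[ℝ] ℝ) → ℕ := fun i =>
        if h : ∃ j : ℕ, Xs j ω ∈ B i then Nat.find h else 0 with hji
      have hji_mem : ∀ i ∈ I, Xs (ji i) ω ∈ B i := by
        intro i hi
        rw [hji]
        simp only
        rw [dif_pos (hex i hi)]
        exact Nat.find_spec (hex i hi)
      have hji_min : ∀ i ∈ I, ∀ n < ji i, Xs n ω ∉ B i := by
        intro i hi n hn
        rw [hji] at hn
        simp only at hn
        rw [dif_pos (hex i hi)] at hn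
        exact Nat.find_min (hex i hi) hn
      have hji_le : ∀ i ∈ I, (ji i : ℝ≥0∞) ≤ T i ω := by
        intro i hi
        have hone : ∀ n ∈ Finset.range (ji i),
            (G i (n + 1)).indicator (1 : Ω → ℝ≥0∞) ω = 1 := by
          intro n hn
          rw [Finset.mem_range] at hn
          refine Set.indicator_of_mem ?_ _
          refine Set.mem_iInter₂.mpr fun j hj => ?_
          rw [Finset.mem_range] at hj
          exact hji_min i hi j (lt_of_le_of_lt (Nat.lt_succ_iff.mp hj) hn)
        calc (ji i : ℝ≥0∞)
            = ∑ n ∈ Finset.range (ji i), (G i (n + 1)).indicator (1 : Ω → ℝ≥0∞) ω := by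
              rw [Finset.sum_congr rfl hone]
              simp
          _ ≤ T i ω := by rw [hT]; exact ENNReal.sum_le_tsum _
      set nstar : ℕ := 1 + ∑ i ∈ I, ji i with hnstar
      have hji_lt : ∀ i ∈ I, ji i < nstar := by
        intro i hi
        rw [hnstar]
        have : ji i ≤ ∑ i ∈ I, ji i := Finset.single_le_sum (fun i _ => Nat.zero_le _) hi
        omega
      have hmem : mu ∈ convexHull ℝ ((fun k => φ (Xs k ω)) '' Set.Iio nstar) := by
        refine mem_convexHull_of_forall_dual ((Set.finite_Iio _).image _) ?_
        refine geom_key mu W U hWU Aset hAspan I t R hcov' _ ?_ ?_ ?_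
        · exact ⟨φ (Xs 0 ω), ⟨0, by simp [hnstar], rfl⟩⟩
        · rintro z ⟨k, _, rfl⟩
          exact Set.mem_iInter.mpr fun k' => Set.mem_iInter.mp (hω k) k'
        · intro i hi
          refine ⟨φ (Xs (ji i) ω), ⟨ji i, hji_lt i hi, rfl⟩, ?_⟩
          exact hji_mem i hi
      calc sInf {r : ENNReal | ∃ n : ℕ, r = n ∧
            mu ∈ convexHull ℝ ((fun i => φ (Xs i ω)) '' Set.Iio n)}
          ≤ (nstar : ℝ≥0∞) := sInf_le ⟨nstar, rfl, hmem⟩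
        _ = 1 + ∑ i ∈ I, (ji i : ℝ≥0∞) := by
            rw [hnstar]
            push_cast
            rfl
        _ ≤ 1 + ∑ i ∈ I, T i ω := add_le_add_right (Finset.sum_le_sum hji_le) 1
  -- conclusion
  calc ∫⁻ ω, sInf {r : ENNReal | ∃ n : ℕ, r = n ∧
        mu ∈ convexHull ℝ ((fun i => φ (Xs i ω)) '' Set.Iio n)} ∂P
      ≤ ∫⁻ ω, (1 + ∑ i ∈ I, T i ω) ∂P := lintegral_mono_ae habound
    _ = 1 + ∑ i ∈ I, ∫⁻ ω, T i ω ∂P := by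
        rw [lintegral_add_left measurable_const,
          lintegral_finset_sum _ fun i _ => hTmeas i]
        simp
    _ < ⊤ := by
        refine ENNReal.add_lt_top.mpr ⟨ENNReal.one_lt_top, ?_⟩
        rw [ENNReal.sum_lt_top]
        exact fun i hi => hTint i hi
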